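/- For every n ≥ 3, sat*(n, Y) = n + 2. -/
import Mathlib


/-- `φ` is an induced-copy map of the poset `P` into the family `F`
(posets are finite collections of finite subsets of `ℕ`, ordered by inclusion). -/
def IsCopyMap (P F : Finset (Finset ℕ)) (φ : Finset ℕ → Finset ℕ) : Prop :=
  Set.InjOn φ ↑P ∧ (∀ A ∈ P, φ A ∈ F) ∧ ∀ A ∈ P, ∀ B ∈ P, (φ A ⊆ φ B ↔ A ⊆ B)

/-- `F` contains an induced copy of the poset `P`. -/
def ContainsInduced (P F : Finset (Finset ℕ)) : Prop := ∃ φ, IsCopyMap P F φ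

/-- `F ⊆ 2^[n]` is induced `P`-saturated. -/
def InducedSaturated (n : ℕ) (P F : Finset (Finset ℕ)) : Prop :=
  (∀ A ∈ F, A ⊆ Finset.Icc 1 n) ∧ ¬ ContainsInduced P F ∧
  ∀ S ⊆ Finset.Icc 1 n, S ∉ F → ContainsInduced P (insert S F)

/-- `P` has legs `L1, L2` and hip `H`. -/
def LegsAt (P : Finset (Finset ℕ)) (L1 L2 H : Finset ℕ) : Prop :=
  L1 ∈ P ∧ L2 ∈ P ∧ H ∈ P ∧ L1 ≠ L2 ∧ L1 ≠ H ∧ L2 ≠ H ∧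
  ¬ L1 ⊆ L2 ∧ ¬ L2 ⊆ L1 ∧ L1 ⊆ H ∧ L2 ⊆ H ∧
  ∀ A ∈ P, A ≠ L1 → A ≠ L2 → A ≠ H → H ⊆ A

/-- `P` has legs. -/
def HasLegs (P : Finset (Finset ℕ)) : Prop := ∃ L1 L2 H, LegsAt P L1 L2 H

/-- `sat*(n, P)`: the minimum size of an induced `P`-saturated family in `2^[n]`. -/
noncomputable def satStar (n : ℕ) (P : Finset (Finset ℕ)) : ℕ :=
  sInf {k | ∃ F : Finset (Finset ℕ), InducedSaturated n P F ∧ F.card = k}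

/-- The poset `Y`: two incomparable minimal elements below a common element,
which lies below a single maximal element. -/
def posetY : Finset (Finset ℕ) := {{1}, {2}, {1, 2}, {1, 2, 3}}


def Config (G : Finset (Finset ℕ)) (a b c d : Finset ℕ) : Prop :=
  a ∈ G ∧ b ∈ G ∧ c ∈ G ∧ d ∈ G ∧
  ¬ a ⊆ b ∧ ¬ b ⊆ a ∧ a ⊆ c ∧ b ⊆ c ∧ c ⊆ d ∧ ¬ d ⊆ c

lemma mem_posetY_iff {A : Finset ℕ} :
    A ∈ posetY ↔ A = {1} ∨ A = {2} ∨ A = {1,2} ∨ A = {1,2,3} := by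
  simp [posetY]

lemma contains_iff (G : Finset (Finset ℕ)) :
    ContainsInduced posetY G ↔ ∃ a b c d, Config G a b c d := by
  constructor
  · rintro ⟨φ, hinj, hmem, hiff⟩
    refine ⟨φ {1}, φ {2}, φ {1,2}, φ {1,2,3},
      hmem _ (by decide), hmem _ (by decide), hmem _ (by decide), hmem _ (by decide),
      ?_, ?_, ?_, ?_, ?_, ?_⟩
    · intro h
      have := (hiff _ (by decide) _ (by decide)).mp h
      revert this; decide
    · intro h
      have := (hiff _ (by decide) _ (by decide)).mp h
      revert this; decide
    · exact (hiff _ (by decide) _ (by decide)).mpr (by decide)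
    · exact (hiff _ (by decide) _ (by decide)).mpr (by decide)
    · exact (hiff _ (by decide) _ (by decide)).mpr (by decide)
    · intro h
      have := (hiff _ (by decide) _ (by decide)).mp h
      revert this; decide
  · rintro ⟨a, b, c, d, ha, hb, hc, hd, hab, hba, hac, hbc, hcd, hdc⟩
    classical
    set φ : Finset ℕ → Finset ℕ :=
      fun A => if A = {1} then a else if A = {2} then b else if A = {1,2} then c else d with hφ
    have e1 : φ {1} = a := by simp [hφ]
    have e2 : φ {2} = b := by
      rw [hφ]; beta_reduce; rw [if_neg (by decide), if_pos rfl]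
    have e3 : φ ({1,2} : Finset ℕ) = c := by
      rw [hφ]; beta_reduce; rw [if_neg (by decide), if_neg (by decide), if_pos rfl]
    have e4 : φ ({1,2,3} : Finset ℕ) = d := by
      rw [hφ]; beta_reduce; rw [if_neg (by decide), if_neg (by decide), if_neg (by decide)]
    -- distinctness
    have nab : a ≠ b := fun h => hab (h ▸ subset_rfl)
    have nac : a ≠ c := fun h => hba (h ▸ hbc)
    have nbc : b ≠ c := fun h => hab (h ▸ hac)
    have ncd : c ≠ d := fun h => hdc (h ▸ subset_rfl)
    have nad : a ≠ d := fun h => hdc (h ▸ hac)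
    have nbd : b ≠ d := fun h => hdc (h ▸ hbc)
    have hca : ¬ c ⊆ a := fun h => hba (hbc.trans h)
    have hcb : ¬ c ⊆ b := fun h => hab (hac.trans h)
    have hda : ¬ d ⊆ a := fun h => hdc (h.trans hac)
    have hdb : ¬ d ⊆ b := fun h => hdc (h.trans hbc)
    have had : a ⊆ d := hac.trans hcd
    have hbd : b ⊆ d := hbc.trans hcd
    refine ⟨φ, ?_, ?_, ?_⟩
    · intro A hA B hB h
      rw [Finset.mem_coe, mem_posetY_iff] at hA hB
      rcases hA with rfl | rfl | rfl | rfl <;> rcases hB with rfl | rfl | rfl | rfl <;>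
        simp only [e1, e2, e3, e4] at h <;> first
          | rfl
          | exact absurd h nab | exact absurd h nac | exact absurd h nad
          | exact absurd h nbc | exact absurd h nbd | exact absurd h ncd
          | exact absurd h.symm nab | exact absurd h.symm nac | exact absurd h.symm nad
          | exact absurd h.symm nbc | exact absurd h.symm nbd | exact absurd h.symm ncd
    · intro A hA
      rw [mem_posetY_iff] at hA
      rcases hA with rfl | rfl | rfl | rfl <;> simp only [e1, e2, e3, e4] <;> assumption
    · intro A hA B hB
      rw [mem_posetY_iff] at hA hB
      rcases hA with rfl | rfl | rfl | rfl <;> rcases hB with rfl | rfl | rfl | rfl <;>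
        simp only [e1, e2, e3, e4] <;> first
          | exact iff_of_true subset_rfl subset_rfl
          | exact iff_of_true hac (by decide)
          | exact iff_of_true hbc (by decide)
          | exact iff_of_true hcd (by decide)
          | exact iff_of_true had (by decide)
          | exact iff_of_true hbd (by decide)
          | exact iff_of_false hab (by decide)
          | exact iff_of_false hba (by decide)
          | exact iff_of_false hca (by decide)
          | exact iff_of_false hcb (by decide)
          | exact iff_of_false hda (by decide)
          | exact iff_of_false hdb (by decide)
          | exact iff_of_false hdc (by decide)

section Lower

variable {n : ℕ} {F : Finset (Finset ℕ)}

lemma roles (hfree : ¬ ∃ a b c d, Config F a b c d) {S : Finset ℕ} (hS : S ∉ F)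
    (hins : ∃ a b c d, Config (insert S F) a b c d) :
    (∃ b ∈ F, ∃ c ∈ F, ∃ d ∈ F, ¬S ⊆ b ∧ ¬b ⊆ S ∧ S ⊆ c ∧ b ⊆ c ∧ c ⊆ d ∧ ¬d ⊆ c) ∨
    (∃ a ∈ F, ∃ b ∈ F, ∃ d ∈ F, ¬a ⊆ b ∧ ¬b ⊆ a ∧ a ⊆ S ∧ b ⊆ S ∧ S ⊆ d ∧ ¬d ⊆ S) ∨
    (∃ a ∈ F, ∃ b ∈ F, ∃ c ∈ F, ¬a ⊆ b ∧ ¬b ⊆ a ∧ a ⊆ c ∧ b ⊆ c ∧ c ⊆ S ∧ ¬S ⊆ c) := by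
  obtain ⟨a, b, c, d, ha, hb, hc, hd, hab, hba, hac, hbc, hcd, hdc⟩ := hins
  have ha' := Finset.mem_insert.mp ha
  have hb' := Finset.mem_insert.mp hb
  have hc' := Finset.mem_insert.mp hc
  have hd' := Finset.mem_insert.mp hd
  rcases ha' with ha' | ha'
  · rcases hb' with hb' | hb'
    · exact absurd (ha' ▸ hb' ▸ subset_rfl : a ⊆ b) hab
    rcases hc' with hc' | hc'
    · exact absurd (ha' ▸ hc' ▸ hbc : b ⊆ a) hba
    rcases hd' with hd' | hd'
    · exact absurd hac (by rw [ha', ← hd']; exact hdc)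
    · subst ha'
      exact Or.inl ⟨b, hb', c, hc', d, hd', hab, hba, hac, hbc, hcd, hdc⟩
  · rcases hb' with hb' | hb'
    · rcases hc' with hc' | hc'
      · exact absurd (hb' ▸ hc' ▸ hac : a ⊆ b) hab
      rcases hd' with hd' | hd'
      · exact absurd hbc (by rw [hb', ← hd']; exact hdc)
      · subst hb'
        exact Or.inl ⟨a, ha', c, hc', d, hd', hba, hab, hbc, hac, hcd, hdc⟩
    · rcases hc' with hc' | hc'
      · rcases hd' with hd' | hd'
        · exact absurd (hc' ▸ hd' ▸ subset_rfl : d ⊆ c) hdc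
        · subst hc'
          exact Or.inr (Or.inl ⟨a, ha', b, hb', d, hd', hab, hba, hac, hbc, hcd, hdc⟩)
      · rcases hd' with hd' | hd'
        · subst hd'
          exact Or.inr (Or.inr ⟨a, ha', b, hb', c, hc', hab, hba, hac, hbc, hcd, hdc⟩)
        · exact absurd ⟨a, b, c, d, ha', hb', hc', hd', hab, hba, hac, hbc, hcd, hdc⟩ hfree

lemma chainIn (hfree : ¬ ∃ a b c d, Config F a b c d) {e d : Finset ℕ}
    (he : e ∈ F) (hd : d ∈ F) (hed : e ⊂ d) :
    ∀ a ∈ F, a ⊆ e → ∀ b ∈ F, b ⊆ e → a ⊆ b ∨ b ⊆ a := by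
  intro a ha hae b hb hbe
  by_contra hcon
  push_neg at hcon
  have hed' := ssubset_iff_subset_not_subset.mp hed
  exact hfree ⟨a, b, e, d, ha, hb, he, hd, hcon.1, hcon.2, hae, hbe, hed'.1, hed'.2⟩

lemma config_free (hF : InducedSaturated n posetY F) : ¬ ∃ a b c d, Config F a b c d :=
  fun h => hF.2.1 ((contains_iff F).mpr h)

lemma sat_roles (hF : InducedSaturated n posetY F) {S : Finset ℕ}
    (hSsub : S ⊆ Finset.Icc 1 n) (hS : S ∉ F) :
    (∃ b ∈ F, ∃ c ∈ F, ∃ d ∈ F, ¬S ⊆ b ∧ ¬b ⊆ S ∧ S ⊆ c ∧ b ⊆ c ∧ c ⊆ d ∧ ¬d ⊆ c) ∨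
    (∃ a ∈ F, ∃ b ∈ F, ∃ d ∈ F, ¬a ⊆ b ∧ ¬b ⊆ a ∧ a ⊆ S ∧ b ⊆ S ∧ S ⊆ d ∧ ¬d ⊆ S) ∨
    (∃ a ∈ F, ∃ b ∈ F, ∃ c ∈ F, ¬a ⊆ b ∧ ¬b ⊆ a ∧ a ⊆ c ∧ b ⊆ c ∧ c ⊆ S ∧ ¬S ⊆ c) :=
  roles (config_free hF) hS ((contains_iff _).mp (hF.2.2 S hSsub hS))

lemma empty_mem (hF : InducedSaturated n posetY F) : ∅ ∈ F := by
  by_contra hne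
  rcases sat_roles hF (Finset.empty_subset _) hne with
    ⟨b, hb, c, hc, d, hd, h1, h2, h3, h4, h5, h6⟩ |
    ⟨a, ha, b, hb, d, hd, h1, h2, h3, h4, h5, h6⟩ |
    ⟨a, ha, b, hb, c, hc, h1, h2, h3, h4, h5, h6⟩
  · exact h1 (Finset.empty_subset _)
  · rw [Finset.subset_empty] at h3 h4
    exact h1 (h3 ▸ h4 ▸ subset_rfl)
  · exact h6 (Finset.empty_subset _)

lemma small_comparable {x : Finset ℕ} {t : ℕ} (hx : x ⊆ {t}) {a b : Finset ℕ}
    (hax : a ⊆ x) (hbx : b ⊆ x) : a ⊆ b ∨ b ⊆ a := by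
  rcases Finset.subset_singleton_iff.mp (hax.trans hx) with ha | ha
  · exact Or.inl (ha ▸ Finset.empty_subset _)
  · refine Or.inr (hbx.trans (hx.trans ?_))
    rw [ha]

lemma cover (hF : InducedSaturated n posetY F) (hn : 3 ≤ n) {i : ℕ}
    (hi : i ∈ Finset.Icc 1 n) : ∃ c ∈ F, i ∈ c ∧ ∃ d ∈ F, c ⊂ d := by
  by_contra hcon
  push_neg at hcon
  by_cases hsing : ({i} : Finset ℕ) ∈ F
  · set x : ℕ := if i = 1 then 2 else 1 with hxdef
    have hin := Finset.mem_Icc.mp hi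
    have hxi : x ≠ i := by
      by_cases h : i = 1 <;> simp [hxdef, h] <;> omega
    have hxIcc : x ∈ Finset.Icc 1 n := by
      rw [Finset.mem_Icc]
      by_cases h : i = 1 <;> simp [hxdef, h] <;> omega
    have hiS : i ∈ ({i, x} : Finset ℕ) := Finset.mem_insert_self _ _
    have hxS : x ∈ ({i, x} : Finset ℕ) := Finset.mem_insert_of_mem (Finset.mem_singleton_self x)
    have hiSsub : ({i} : Finset ℕ) ⊆ {i, x} := Finset.singleton_subset_iff.mpr hiS
    have hSsub : ({i, x} : Finset ℕ) ⊆ Finset.Icc 1 n := by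
      intro t ht
      rcases Finset.mem_insert.mp ht with rfl | ht
      · exact hi
      · rwa [Finset.mem_singleton.mp ht]
    have hSF : ({i, x} : Finset ℕ) ∉ F := by
      intro h
      refine hcon {i} hsing (Finset.mem_singleton_self i) {i, x} h
        (ssubset_iff_subset_not_subset.mpr ⟨hiSsub, fun hsub => hxi (Finset.mem_singleton.mp (hsub hxS))⟩)
    rcases sat_roles hF hSsub hSF with
      ⟨b, hb, c, hc, d, hd, h1, h2, h3, h4, h5, h6⟩ |
      ⟨a, ha, b, hb, d, hd, h1, h2, h3, h4, h5, h6⟩ |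
      ⟨a, ha, b, hb, c, hc, h1, h2, h3, h4, h5, h6⟩
    · exact hcon c hc (h3 hiS) d hd (ssubset_iff_subset_not_subset.mpr ⟨h5, h6⟩)
    · refine hcon {i} hsing (Finset.mem_singleton_self i) d hd
        (ssubset_iff_subset_not_subset.mpr ⟨hiSsub.trans h5, fun hsub => h6 (hsub.trans hiSsub)⟩)
    · obtain ⟨t, htS, htc⟩ := Finset.not_subset.mp h6
      have hcsub : c ⊆ ({i, x} : Finset ℕ).erase t :=
        fun z hz => Finset.mem_erase.mpr ⟨fun h => htc (h ▸ hz), h5 hz⟩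
      have hsmall : ∃ s, ({i, x} : Finset ℕ).erase t ⊆ {s} := by
        rcases Finset.mem_insert.mp htS with h | h
        · refine ⟨x, fun z hz => ?_⟩
          rcases Finset.mem_erase.mp hz with ⟨hz1, hz2⟩
          rcases Finset.mem_insert.mp hz2 with hzz | hzz
          · exact absurd (hzz.trans h.symm) hz1
          · exact hzz
        · have htx : t = x := Finset.mem_singleton.mp h
          refine ⟨i, fun z hz => ?_⟩
          rcases Finset.mem_erase.mp hz with ⟨hz1, hz2⟩
          rcases Finset.mem_insert.mp hz2 with hzz | hzz
          · rw [hzz]; exact Finset.mem_singleton_self i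
          · exact absurd ((Finset.mem_singleton.mp hzz).trans htx.symm) hz1
      obtain ⟨s, hs⟩ := hsmall
      rcases small_comparable (hcsub.trans hs) h3 h4 with h | h
      · exact h1 h
      · exact h2 h
  · have hSsub : ({i} : Finset ℕ) ⊆ Finset.Icc 1 n := Finset.singleton_subset_iff.mpr hi
    rcases sat_roles hF hSsub hsing with
      ⟨b, hb, c, hc, d, hd, h1, h2, h3, h4, h5, h6⟩ |
      ⟨a, ha, b, hb, d, hd, h1, h2, h3, h4, h5, h6⟩ |
      ⟨a, ha, b, hb, c, hc, h1, h2, h3, h4, h5, h6⟩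
    · exact hcon c hc (h3 (Finset.mem_singleton_self i)) d hd
        (ssubset_iff_subset_not_subset.mpr ⟨h5, h6⟩)
    · rcases small_comparable (subset_rfl : ({i}:Finset ℕ) ⊆ {i}) h3 h4 with h | h
      · exact h1 h
      · exact h2 h
    · have hc0 : c = ∅ := by
        rcases Finset.subset_singleton_iff.mp h5 with h | h
        · exact h
        · exact absurd (h ▸ subset_rfl) h6
      subst hc0
      rw [Finset.subset_empty] at h3 h4
      exact h1 (h3 ▸ h4 ▸ subset_rfl)

end Lower


section Tree

variable {n : ℕ} {F : Finset (Finset ℕ)}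

/-- Branch-splitting lemma: if `w` covers `x` in `F`, `w` is non-maximal, and `w \ x`
has at least two elements, then for each `u ∈ w \ x` there is a non-maximal `e ⊇ x ∪ {u}`
together with `b ∈ F`, `x ⊂ b ⊆ e`, `u ∉ b`. -/
lemma lemD (hF : InducedSaturated n posetY F) {x w : Finset ℕ} {u v : ℕ}
    (hxF : x ∈ F) (hwF : w ∈ F) (hxw : x ⊂ w) (hwN : ∃ d ∈ F, w ⊂ d)
    (hpred : ∀ z ∈ F, z ⊂ w → z ⊆ x)
    (hu : u ∈ w) (hux : u ∉ x) (hv : v ∈ w) (hvx : v ∉ x) (huv : u ≠ v) :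
    ∃ e ∈ F, ∃ b ∈ F, (∃ d' ∈ F, e ⊂ d') ∧ insert u x ⊆ e ∧ x ⊂ b ∧ b ⊆ e ∧ u ∉ b := by
  have hfree := config_free hF
  obtain ⟨dw, hdwF, hwdw⟩ := hwN
  have hchw := chainIn hfree hwF hdwF hwdw
  have hSw : insert u x ⊆ w := Finset.insert_subset hu hxw.subset
  have hSproper : insert u x ⊂ w := by
    refine ssubset_iff_subset_not_subset.mpr ⟨hSw, fun hcon => ?_⟩
    rcases Finset.mem_insert.mp (hcon hv) with h | h
    · exact huv h.symm
    · exact hvx h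
  have hSsub : insert u x ⊆ Finset.Icc 1 n := hSw.trans (hF.1 w hwF)
  have hSF : insert u x ∉ F := fun h =>
    hux (hpred _ h hSproper (Finset.mem_insert_self u x))
  rcases sat_roles hF hSsub hSF with
    ⟨b, hb, c, hc, d, hd, h1, h2, h3, h4, h5, h6⟩ |
    ⟨a, ha, b, hb, d, hd, h1, h2, h3, h4, h5, h6⟩ |
    ⟨a, ha, b, hb, c, hc, h1, h2, h3, h4, h5, h6⟩
  · -- S is a leg
    have hcd : c ⊂ d := ssubset_iff_subset_not_subset.mpr ⟨h5, h6⟩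
    have hxc : x ⊆ c := (Finset.subset_insert u x).trans h3
    have hxb : x ⊆ b := by
      rcases chainIn hfree hc hd hcd b hb h4 x hxF hxc with h | h
      · exact absurd (h.trans (Finset.subset_insert u x)) h2
      · exact h
    have hub : u ∉ b := fun hub => h1 (Finset.insert_subset hub hxb)
    refine ⟨c, hc, b, hb, ⟨d, hd, hcd⟩, h3, ?_, h4, hub⟩
    exact ssubset_iff_subset_not_subset.mpr
      ⟨hxb, fun hbx => h2 (hbx.trans (Finset.subset_insert u x))⟩
  · -- S is the hip: legs inside w, contradiction
    rcases hchw a ha (h3.trans hSw) b hb (h4.trans hSw) with h | h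
    · exact absurd h h1
    · exact absurd h h2
  · -- S is the top: legs inside w, contradiction
    rcases hchw a ha (h3.trans (h5.trans hSw)) b hb (h4.trans (h5.trans hSw)) with h | h
    · exact absurd h h1
    · exact absurd h h2

variable (F) in
/-- non-maximal members of `F` -/
def Nn : Finset (Finset ℕ) := F.filter fun c => ∃ d ∈ F, c ⊂ d

variable (F) in
/-- subtree above `x` -/
def Tt (x : Finset ℕ) : Finset (Finset ℕ) := (Nn F).filter fun y => x ⊆ y

variable (F) in
/-- union of the subtree above `x` -/
def Uu (x : Finset ℕ) : Finset ℕ := (Tt F x).sup id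

variable (F) in
/-- children of `x` -/
def Ch (x : Finset ℕ) : Finset (Finset ℕ) :=
  (Tt F x).filter fun w => x ⊂ w ∧ ∀ z ∈ F, z ⊂ w → z ⊆ x

lemma mem_Nn {c : Finset ℕ} : c ∈ Nn F ↔ c ∈ F ∧ ∃ d ∈ F, c ⊂ d := Finset.mem_filter

lemma mem_Tt {x y : Finset ℕ} : y ∈ Tt F x ↔ y ∈ Nn F ∧ x ⊆ y := Finset.mem_filter

lemma mem_Ch {x w : Finset ℕ} :
    w ∈ Ch F x ↔ w ∈ Tt F x ∧ x ⊂ w ∧ ∀ z ∈ F, z ⊂ w → z ⊆ x := Finset.mem_filter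

lemma child_exists (hF : InducedSaturated n posetY F) {x y : Finset ℕ}
    (hxF : x ∈ F) (hy : y ∈ Tt F x) (hxy : y ≠ x) : ∃ w ∈ Ch F x, w ⊆ y := by
  have hfree := config_free hF
  obtain ⟨hyN, hxysub⟩ := mem_Tt.mp hy
  obtain ⟨hyF, dy, hdyF, hydy⟩ := mem_Nn.mp hyN
  have hchy := chainIn hfree hyF hdyF hydy
  set W : Finset (Finset ℕ) := F.filter (fun z => x ⊂ z ∧ z ⊆ y) with hWdef
  have hyW : y ∈ W := by
    rw [hWdef, Finset.mem_filter]
    exact ⟨hyF, ssubset_iff_subset_not_subset.mpr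
      ⟨hxysub, fun h => hxy (Finset.Subset.antisymm h hxysub)⟩, subset_rfl⟩
  obtain ⟨w, hwW, hmin⟩ := W.exists_min_image (fun z => z.card) ⟨y, hyW⟩
  rw [hWdef, Finset.mem_filter] at hwW
  obtain ⟨hwF, hxw, hwy⟩ := hwW
  have hwN : w ∈ Nn F := mem_Nn.mpr ⟨hwF, dy, hdyF,
    ssubset_iff_subset_not_subset.mpr ⟨hwy.trans hydy.subset,
      fun h => (ssubset_iff_subset_not_subset.mp hydy).2 (h.trans hwy)⟩⟩
  refine ⟨w, mem_Ch.mpr ⟨mem_Tt.mpr ⟨hwN, hxw.subset⟩, hxw, ?_⟩, hwy⟩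
  intro z hzF hzw
  rcases hchy z hzF (hzw.subset.trans hwy) x hxF hxysub with h | h
  · exact h
  · by_cases hxz : x = z
    · exact hxz ▸ subset_rfl
    · have hzW : z ∈ W := by
        rw [hWdef, Finset.mem_filter]
        exact ⟨hzF, ssubset_iff_subset_not_subset.mpr
          ⟨h, fun h2 => hxz (Finset.Subset.antisymm h h2)⟩, hzw.subset.trans hwy⟩
      exact absurd (hmin z hzW) (not_le.mpr (Finset.card_lt_card hzw))

lemma child_unique (hF : InducedSaturated n posetY F) {x w₁ w₂ y : Finset ℕ}
    (hw₁ : w₁ ∈ Ch F x) (hw₂ : w₂ ∈ Ch F x) (hyN : y ∈ Nn F)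
    (h1y : w₁ ⊆ y) (h2y : w₂ ⊆ y) : w₁ = w₂ := by
  have hfree := config_free hF
  obtain ⟨hyF, dy, hdyF, hydy⟩ := mem_Nn.mp hyN
  obtain ⟨hw₁T, hxw₁, hpred₁⟩ := mem_Ch.mp hw₁
  obtain ⟨hw₂T, hxw₂, hpred₂⟩ := mem_Ch.mp hw₂
  have h1F : w₁ ∈ F := (mem_Nn.mp (mem_Tt.mp hw₁T).1).1
  have h2F : w₂ ∈ F := (mem_Nn.mp (mem_Tt.mp hw₂T).1).1
  by_contra hne
  rcases chainIn hfree hyF hdyF hydy w₁ h1F h1y w₂ h2F h2y with h | h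
  · have : w₁ ⊆ x := hpred₂ w₁ h1F (ssubset_iff_subset_not_subset.mpr
      ⟨h, fun h2 => hne (Finset.Subset.antisymm h h2)⟩)
    exact (ssubset_iff_subset_not_subset.mp hxw₁).2 this
  · have : w₂ ⊆ x := hpred₁ w₂ h2F (ssubset_iff_subset_not_subset.mpr
      ⟨h, fun h2 => hne (Finset.Subset.antisymm h2 h)⟩)
    exact (ssubset_iff_subset_not_subset.mp hxw₂).2 this

lemma tree_count (hF : InducedSaturated n posetY F) :
    ∀ k, ∀ x, x ∈ Nn F → (Tt F x).card ≤ k →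
      (Uu F x \ x).card + 1 ≤ (Tt F x).card := by
  intro k
  induction k with
  | zero =>
    intro x hx hk
    have : x ∈ Tt F x := mem_Tt.mpr ⟨hx, subset_rfl⟩
    have := Finset.card_pos.mpr ⟨x, this⟩
    omega
  | succ k ih =>
    intro x hx hk
    have hxF : x ∈ F := (mem_Nn.mp hx).1
    have hxT : x ∈ Tt F x := mem_Tt.mpr ⟨hx, subset_rfl⟩
    -- decomposition of the subtree into children subtrees
    have hTsub : ∀ w ∈ Ch F x, Tt F w ⊆ (Tt F x).erase x := by
      intro w hw y hy
      obtain ⟨hwT, hxw, _⟩ := mem_Ch.mp hw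
      obtain ⟨hyN, hwy⟩ := mem_Tt.mp hy
      refine Finset.mem_erase.mpr ⟨?_, mem_Tt.mpr ⟨hyN, hxw.subset.trans hwy⟩⟩
      rintro rfl
      exact (ssubset_iff_subset_not_subset.mp hxw).2 hwy
    have hTeq : (Tt F x).erase x = (Ch F x).biUnion (fun w => Tt F w) := by
      ext y
      constructor
      · intro hy
        obtain ⟨hyx, hyT⟩ := Finset.mem_erase.mp hy
        obtain ⟨w, hw, hwy⟩ := child_exists hF hxF hyT hyx
        exact Finset.mem_biUnion.mpr ⟨w, hw, mem_Tt.mpr ⟨(mem_Tt.mp hyT).1, hwy⟩⟩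
      · intro hy
        obtain ⟨w, hw, hyw⟩ := Finset.mem_biUnion.mp hy
        exact hTsub w hw hyw
    have hdisj : ∀ w₁ ∈ Ch F x, ∀ w₂ ∈ Ch F x, w₁ ≠ w₂ →
        Disjoint (Tt F w₁) (Tt F w₂) := by
      intro w₁ h1 w₂ h2 hne
      rw [Finset.disjoint_left]
      intro y hy1 hy2
      obtain ⟨hyN, h1y⟩ := mem_Tt.mp hy1
      obtain ⟨_, h2y⟩ := mem_Tt.mp hy2
      exact hne (child_unique hF h1 h2 hyN h1y h2y)
    have hcard : (Tt F x).card = (∑ w ∈ Ch F x, (Tt F w).card) + 1 := by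
      rw [← Finset.card_biUnion hdisj, ← hTeq, Finset.card_erase_add_one hxT]
    -- apply induction hypothesis to each child
    have hChN : ∀ w ∈ Ch F x, w ∈ Nn F := fun w hw => (mem_Tt.mp (mem_Ch.mp hw).1).1
    have hchT : ∀ w ∈ Ch F x, (Tt F w).card ≤ k := by
      intro w hw
      have h1 : (Tt F w).card ≤ ((Tt F x).erase x).card :=
        Finset.card_le_card (hTsub w hw)
      have h2 : ((Tt F x).erase x).card + 1 = (Tt F x).card :=
        Finset.card_erase_add_one hxT
      omega
    have hIH : ∀ w ∈ Ch F x, (Uu F w \ w).card + 1 ≤ (Tt F w).card :=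
      fun w hw => ih w (hChN w hw) (hchT w hw)
    -- union bound
    classical
    have hUsub : Uu F x \ x ⊆ (Ch F x).biUnion
        (fun w => (Uu F w \ w) ∪ (if (w \ x).card = 1 then w \ x else ∅)) := by
      intro u hu
      obtain ⟨huU, hux⟩ := Finset.mem_sdiff.mp hu
      obtain ⟨y, hyT, huy⟩ := Finset.mem_sup.mp huU
      have hyx : y ≠ x := fun h => hux (h ▸ huy)
      obtain ⟨w, hw, hwy⟩ := child_exists hF hxF hyT hyx
      have hyTw : y ∈ Tt F w := mem_Tt.mpr ⟨(mem_Tt.mp hyT).1, hwy⟩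
      have huUw : u ∈ Uu F w := Finset.mem_sup.mpr ⟨y, hyTw, huy⟩
      by_cases huw : u ∈ w
      · have huwx : u ∈ w \ x := Finset.mem_sdiff.mpr ⟨huw, hux⟩
        by_cases hone : (w \ x).card = 1
        · refine Finset.mem_biUnion.mpr ⟨w, hw, Finset.mem_union_right _ ?_⟩
          rw [if_pos hone]; exact huwx
        · -- gap of size ≥ 2 : use the branch-splitting lemma
          have h2 : 1 < (w \ x).card := by
            have := Finset.card_pos.mpr ⟨u, huwx⟩
            omega
          obtain ⟨v, hvwx, hvu⟩ := Finset.exists_mem_ne h2 u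
          obtain ⟨hvw, hvx⟩ := Finset.mem_sdiff.mp hvwx
          obtain ⟨hwT, hxw, hpred⟩ := mem_Ch.mp hw
          obtain ⟨hwF, hdw⟩ := mem_Nn.mp (mem_Tt.mp hwT).1
          obtain ⟨e, heF, b, hbF, ⟨d', hd'F, hed'⟩, hSe, hxb, hbe, hub⟩ :=
            lemD hF hxF hwF hxw hdw hpred huw hux hvw hvx (hvu.symm)
          have heN : e ∈ Nn F := mem_Nn.mpr ⟨heF, d', hd'F, hed'⟩
          have hxe : x ⊆ e := (Finset.subset_insert u x).trans hSe
          have hue : u ∈ e := hSe (Finset.mem_insert_self u x)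
          have heT : e ∈ Tt F x := mem_Tt.mpr ⟨heN, hxe⟩
          have hex : e ≠ x := fun h => hux (h ▸ hue)
          obtain ⟨w', hw', hw'e⟩ := child_exists hF hxF heT hex
          obtain ⟨hw'T, hxw', hpred'⟩ := mem_Ch.mp hw'
          have hw'F : w' ∈ F := (mem_Nn.mp (mem_Tt.mp hw'T).1).1
          have hw'b : w' ⊆ b := by
            rcases chainIn (config_free hF) heF hd'F hed' b hbF hbe w' hw'F hw'e with h | h
            · by_cases hbw : b = w'
              · exact hbw ▸ subset_rfl
              · exact absurd (hpred' b hbF (ssubset_iff_subset_not_subset.mpr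
                  ⟨h, fun h2 => hbw (Finset.Subset.antisymm h h2)⟩))
                  (ssubset_iff_subset_not_subset.mp hxb).2
            · exact h
          have huw' : u ∉ w' := fun h => hub (hw'b h)
          have heTw' : e ∈ Tt F w' := mem_Tt.mpr ⟨heN, hw'e⟩
          refine Finset.mem_biUnion.mpr ⟨w', hw', Finset.mem_union_left _ ?_⟩
          exact Finset.mem_sdiff.mpr ⟨Finset.mem_sup.mpr ⟨e, heTw', hue⟩, huw'⟩
      · exact Finset.mem_biUnion.mpr ⟨w, hw, Finset.mem_union_left _
          (Finset.mem_sdiff.mpr ⟨huUw, huw⟩)⟩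
    have hUcard : (Uu F x \ x).card ≤ ∑ w ∈ Ch F x, ((Uu F w \ w).card + 1) := by
      calc (Uu F x \ x).card
          ≤ ((Ch F x).biUnion
            (fun w => (Uu F w \ w) ∪ (if (w \ x).card = 1 then w \ x else ∅))).card :=
            Finset.card_le_card hUsub
        _ ≤ ∑ w ∈ Ch F x, ((Uu F w \ w) ∪ (if (w \ x).card = 1 then w \ x else ∅)).card :=
            Finset.card_biUnion_le
        _ ≤ ∑ w ∈ Ch F x, ((Uu F w \ w).card + 1) := by
            refine Finset.sum_le_sum fun w hw => ?_
            refine (Finset.card_union_le _ _).trans ?_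
            have : (if (w \ x).card = 1 then w \ x else ∅).card ≤ 1 := by
              split
              · omega
              · simp
            omega
    have hsum : ∑ w ∈ Ch F x, ((Uu F w \ w).card + 1) ≤ ∑ w ∈ Ch F x, (Tt F w).card :=
      Finset.sum_le_sum hIH
    omega

end Tree

theorem lower_bound {n : ℕ} {F : Finset (Finset ℕ)}
    (hF : InducedSaturated n posetY F) (hn : 3 ≤ n) : n + 2 ≤ F.card := by
  have h1n : (1:ℕ) ∈ Finset.Icc 1 n := Finset.mem_Icc.mpr ⟨le_rfl, by omega⟩
  obtain ⟨c₀, hc₀F, h1c₀, d₀, hd₀F, hc₀d₀⟩ := cover hF hn h1n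
  have hemptyN : (∅ : Finset ℕ) ∈ Nn F :=
    mem_Nn.mpr ⟨empty_mem hF, c₀, hc₀F, Finset.empty_ssubset.mpr ⟨1, h1c₀⟩⟩
  have hTn : Tt F ∅ = Nn F := by
    ext y
    rw [mem_Tt]
    exact ⟨fun h => h.1, fun h => ⟨h, Finset.empty_subset _⟩⟩
  have hUcov : Finset.Icc 1 n ⊆ Uu F ∅ := by
    intro i hi
    obtain ⟨c, hcF, hic, d, hdF, hcd⟩ := cover hF hn hi
    exact Finset.mem_sup.mpr ⟨c, mem_Tt.mpr ⟨mem_Nn.mpr ⟨hcF, d, hdF, hcd⟩,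
      Finset.empty_subset _⟩, hic⟩
  have hmain := tree_count hF (Tt F ∅).card ∅ hemptyN le_rfl
  rw [Finset.sdiff_empty] at hmain
  have hUn : n ≤ (Uu F ∅).card := by
    have := Finset.card_le_card hUcov
    rwa [Nat.card_Icc, Nat.add_sub_cancel] at this
  have hNn : n + 1 ≤ (Nn F).card := by
    rw [hTn] at hmain; omega
  -- a maximal member of F
  obtain ⟨m, hmF, hmax⟩ := F.exists_max_image (fun A => A.card) ⟨∅, empty_mem hF⟩
  have hmN : m ∉ Nn F := by
    intro h
    obtain ⟨_, d, hdF, hmd⟩ := mem_Nn.mp h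
    exact absurd (hmax d hdF) (not_le.mpr (Finset.card_lt_card hmd))
  have hins : insert m (Nn F) ⊆ F :=
    Finset.insert_subset hmF (Finset.filter_subset _ _)
  have := Finset.card_le_card hins
  rw [Finset.card_insert_of_notMem hmN] at this
  omega

section Upper

variable (n : ℕ)

/-- the witness family: `∅`, all singletons, and the full set -/
def F0 : Finset (Finset ℕ) :=
  insert (Finset.Icc 1 n) (insert ∅ ((Finset.Icc 1 n).image fun i => ({i} : Finset ℕ)))

lemma F0_card (hn : 3 ≤ n) : (F0 n).card = n + 2 := by
  have hIcccard : (Finset.Icc 1 n).card = n := by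
    rw [Nat.card_Icc, Nat.add_sub_cancel]
  have himg : ((Finset.Icc 1 n).image fun i => ({i} : Finset ℕ)).card = n := by
    rw [Finset.card_image_of_injective _ (fun a b h => Finset.singleton_injective h), hIcccard]
  have hempty : (∅ : Finset ℕ) ∉ (Finset.Icc 1 n).image fun i => ({i} : Finset ℕ) := by
    intro h
    obtain ⟨i, _, hi⟩ := Finset.mem_image.mp h
    exact Finset.singleton_ne_empty i hi
  have hfull : Finset.Icc 1 n ∉ insert ∅ ((Finset.Icc 1 n).image fun i => ({i} : Finset ℕ)) := by
    intro h
    rcases Finset.mem_insert.mp h with h | h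
    · rw [h] at hIcccard; simp at hIcccard; omega
    · obtain ⟨i, _, hi⟩ := Finset.mem_image.mp h
      rw [← hi] at hIcccard
      simp at hIcccard; omega
  rw [F0, Finset.card_insert_of_notMem hfull, Finset.card_insert_of_notMem hempty, himg]

lemma F0_saturated (hn : 3 ≤ n) : InducedSaturated n posetY (F0 n) := by
  have hmem_iff : ∀ A, A ∈ F0 n ↔
      A = Finset.Icc 1 n ∨ A = ∅ ∨ ∃ i ∈ Finset.Icc 1 n, A = {i} := by
    intro A
    simp only [F0, Finset.mem_insert, Finset.mem_image]
    constructor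
    · rintro (h | h | ⟨i, hi, h⟩)
      · exact Or.inl h
      · exact Or.inr (Or.inl h)
      · exact Or.inr (Or.inr ⟨i, hi, h.symm⟩)
    · rintro (h | h | ⟨i, hi, h⟩)
      · exact Or.inl h
      · exact Or.inr (Or.inl h)
      · exact Or.inr (Or.inr ⟨i, hi, h.symm⟩)
  refine ⟨?_, ?_, ?_⟩
  · intro A hA
    rcases (hmem_iff A).mp hA with rfl | rfl | ⟨i, hi, rfl⟩
    · exact subset_rfl
    · exact Finset.empty_subset _
    · exact Finset.singleton_subset_iff.mpr hi
  · rw [contains_iff]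
    rintro ⟨a, b, c, d, ha, hb, hc, hd, hab, hba, hac, hbc, hcd, hdc⟩
    rcases (hmem_iff c).mp hc with rfl | rfl | ⟨i, hi, rfl⟩
    · -- c = Icc 1 n : then d ⊆ c, contradiction
      refine hdc ?_
      rcases (hmem_iff d).mp hd with rfl | rfl | ⟨j, hj, rfl⟩
      · exact subset_rfl
      · exact Finset.empty_subset _
      · exact Finset.singleton_subset_iff.mpr hj
    · rw [Finset.subset_empty] at hac hbc
      exact hab (hac ▸ hbc ▸ subset_rfl)
    · rcases small_comparable subset_rfl hac hbc with h | h
      · exact hab h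
      · exact hba h
  · intro S hSsub hSF
    rw [contains_iff]
    have hSne : S ≠ ∅ := fun h => hSF ((hmem_iff S).mpr (Or.inr (Or.inl h)))
    obtain ⟨i, hiS⟩ := Finset.nonempty_iff_ne_empty.mpr hSne
    have hSnsing : S ≠ {i} := fun h =>
      hSF ((hmem_iff S).mpr (Or.inr (Or.inr ⟨i, hSsub hiS, h⟩)))
    have hexj : ∃ j ∈ S, j ≠ i := by
      by_contra hcon
      push_neg at hcon
      refine hSnsing (Finset.Subset.antisymm (fun z hz => ?_) (Finset.singleton_subset_iff.mpr hiS))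
      rw [Finset.mem_singleton]
      exact hcon z hz
    obtain ⟨j, hjS, hji⟩ := hexj
    have hSIcc : ¬ Finset.Icc 1 n ⊆ S := by
      intro h
      exact hSF ((hmem_iff S).mpr (Or.inl (Finset.Subset.antisymm hSsub h)))
    refine ⟨{i}, {j}, S, Finset.Icc 1 n, ?_, ?_, Finset.mem_insert_self _ _, ?_, ?_, ?_, ?_, ?_, hSsub, hSIcc⟩
    · exact Finset.mem_insert_of_mem ((hmem_iff _).mpr (Or.inr (Or.inr ⟨i, hSsub hiS, rfl⟩)))
    · exact Finset.mem_insert_of_mem ((hmem_iff _).mpr (Or.inr (Or.inr ⟨j, hSsub hjS, rfl⟩)))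
    · exact Finset.mem_insert_of_mem ((hmem_iff _).mpr (Or.inl rfl))
    · intro h
      exact hji (Finset.mem_singleton.mp (h (Finset.mem_singleton_self i))).symm
    · intro h
      exact hji (Finset.mem_singleton.mp (h (Finset.mem_singleton_self j)))
    · exact Finset.singleton_subset_iff.mpr hiS
    · exact Finset.singleton_subset_iff.mpr hjS

end Upper


/-- For `n ≥ 3`, `sat*(n, Y) = n + 2`. -/
theorem sat_star_y (n : ℕ) (hn : 3 ≤ n) : satStar n posetY = n + 2 := by
  have hmem : n + 2 ∈ {k | ∃ F : Finset (Finset ℕ), InducedSaturated n posetY F ∧ F.card = k} :=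
    ⟨F0 n, F0_saturated n hn, F0_card n hn⟩
  refine le_antisymm (Nat.sInf_le hmem) ?_
  refine le_csInf ⟨n + 2, hmem⟩ ?_
  rintro k ⟨F, hFsat, rfl⟩
  exact lower_bound hFsat hn
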